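/- Let G be a countable group and A a finite set with |A| ≥ 2. For every ε > 0, the set of ε-proximal shifts is open in the space 𝒮; consequently the set of shifts S ∈ 𝒮 on which the G-action is proximal (i.e., ε-proximal for every ε > 0) is a G_δ subset of 𝒮. -/

import Mathlib

open scoped Pointwise

/-- The left-translation action of `G` on configurations: `(g • s)(h) = s (g⁻¹ * h)`. -/
def shiftAct {G A : Type*} [Group G] (g : G) (s : G → A) : G → A :=
  fun h => s (g⁻¹ * h)

/-- A shift: a nonempty, closed, `G`-invariant subset of the full shift `A^G` (with the
product topology and the left-translation action). -/
def IsShift {G A : Type*} [Group G] [TopologicalSpace A] (S : Set (G → A)) : Prop :=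
  S.Nonempty ∧ IsClosed S ∧ ∀ s ∈ S, ∀ g : G, shiftAct g s ∈ S

/-- A shift `S ⊆ A^G` is strongly irreducible if there is a finite `X ⊆ G` containing the
identity such that for all `E₁, E₂ ⊆ G` with `E₁X ∩ E₂X = ∅` and all `s₁, s₂ ∈ S` there is
`s ∈ S` agreeing with `s₁` on `E₁` and with `s₂` on `E₂`. -/
def StronglyIrreducible {G A : Type*} [Group G] (S : Set (G → A)) : Prop :=
  ∃ X : Finset G, (1 : G) ∈ X ∧
    ∀ E₁ E₂ : Set G, (E₁ * (X : Set G)) ∩ (E₂ * (X : Set G)) = ∅ →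
      ∀ s₁ ∈ S, ∀ s₂ ∈ S, ∃ s ∈ S, (∀ a ∈ E₁, s a = s₁ a) ∧ (∀ a ∈ E₂, s a = s₂ a)

open scoped Classical in
/-- The metric on `A^G` induced by an enumeration `G = {g₁, g₂, …}` (here `e n = g_{n+1}`):
`d(s, t) = 1 / min {n ≥ 1 : s gₙ ≠ t gₙ}` for `s ≠ t`, and `d(s, s) = 0`. -/
noncomputable def confDist {G A : Type*} (e : ℕ → G) (s t : G → A) : ℝ :=
  if s = t then 0
  else 1 / (((sInf {n : ℕ | s (e n) ≠ t (e n)} : ℕ) : ℝ) + 1)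

/-- The space of shifts in `A^G`. -/
abbrev ShiftSpace (G A : Type*) [Group G] [TopologicalSpace A] : Type _ :=
  {S : Set (G → A) // IsShift S}

/-- Two sets of configurations agree on `F ⊆ G` if they have the same sets of restrictions
to `F`. -/
def AgreeOn {G A : Type*} (F : Set G) (S T : Set (G → A)) : Prop :=
  ∀ p : G → A, (∃ s ∈ S, ∀ x ∈ F, s x = p x) ↔ (∃ t ∈ T, ∀ x ∈ F, t x = p x)

open scoped Classical in
/-- The metric on the space of shifts: `d(S, T) = 1/(n+1)` where `n` is the largest index
such that `S` and `T` agree on `{g₁, …, gₙ}` (with `e k = g_{k+1}`), and `d(S, T) = 0` if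
`S = T`. -/
noncomputable def shiftSpaceDist {G A : Type*} [Group G] [TopologicalSpace A] (e : ℕ → G)
    (S T : ShiftSpace G A) : ℝ :=
  if S = T then 0
  else 1 / (((sSup {n : ℕ | AgreeOn {g : G | ∃ k < n, e k = g} S.1 T.1} : ℕ) : ℝ) + 1)

/-- The metric topology on the space of shifts, generated by the open balls of the metric
`shiftSpaceDist`. -/
noncomputable def shiftSpaceTopology (G A : Type*) [Group G] [TopologicalSpace A]
    (e : ℕ → G) : TopologicalSpace (ShiftSpace G A) :=
  TopologicalSpace.generateFrom
    {U : Set (ShiftSpace G A) |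
      ∃ (S : ShiftSpace G A) (ε : ℝ), 0 < ε ∧ U = {T | shiftSpaceDist e S T < ε}}

/-- The space `𝒮`: the closure, in the space of shifts, of the strongly irreducible shifts,
with the `|A|` singleton (constant-configuration) shifts removed. -/
def scriptS (G A : Type*) [Group G] [TopologicalSpace A] (e : ℕ → G) :
    Set (ShiftSpace G A) :=
  @closure _ (shiftSpaceTopology G A e) {S : ShiftSpace G A | StronglyIrreducible S.1} \
    {S : ShiftSpace G A | ∃ a : A, S.1 = {fun _ => a}}

/-- The subspace topology on `𝒮`. -/
noncomputable def scriptSTopology (G A : Type*) [Group G] [TopologicalSpace A]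
    (e : ℕ → G) : TopologicalSpace ↥(scriptS G A e) :=
  TopologicalSpace.induced Subtype.val (shiftSpaceTopology G A e)

/-- The action of `G` on a shift `S` is `ε`-proximal if for all `s, t ∈ S` there is `g ∈ G`
with `d(g • s, g • t) < ε`. -/
def EpsProximal {G A : Type*} [Group G] (e : ℕ → G) (ε : ℝ) (S : Set (G → A)) : Prop :=
  ∀ s ∈ S, ∀ t ∈ S, ∃ g : G, confDist e (shiftAct g s) (shiftAct g t) < ε

section Aux

variable {G A : Type*} [Group G]

lemma confDist_lt_of_agree (e : ℕ → G) (he : Function.Surjective e) {ε : ℝ} {K : ℕ}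
    (hKε : 1 / ((K : ℝ) + 1) < ε) {u v : G → A}
    (h : ∀ k < K, u (e k) = v (e k)) : confDist e u v < ε := by
  classical
  unfold confDist
  split_ifs with huv
  · exact lt_of_le_of_lt (by positivity) hKε
  · set M := {n : ℕ | u (e n) ≠ v (e n)} with hM
    have hne : M.Nonempty := by
      obtain ⟨x, hx⟩ := Function.ne_iff.mp huv
      obtain ⟨n, rfl⟩ := he x
      exact ⟨n, hx⟩
    have h1 : K ≤ sInf M := by
      by_contra hlt
      push_neg at hlt
      exact (Nat.sInf_mem hne) (h _ hlt)
    refine lt_of_le_of_lt ?_ hKε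
    apply one_div_le_one_div_of_le
    · positivity
    · exact_mod_cast Nat.add_le_add_right h1 1

lemma agree_of_confDist_lt (e : ℕ → G) {ε : ℝ} {K : ℕ}
    (hK : ∀ m < K, ¬ (1 / ((m : ℝ) + 1) < ε)) {u v : G → A}
    (h : confDist e u v < ε) : ∀ k < K, u (e k) = v (e k) := by
  classical
  intro k hk
  unfold confDist at h
  split_ifs at h with huv
  · rw [huv]
  · have h1 : K ≤ sInf {n : ℕ | u (e n) ≠ v (e n)} := by
      by_contra hlt
      push_neg at hlt
      exact hK _ hlt h
    by_contra hne
    have := Nat.sInf_le (by exact hne : k ∈ {n : ℕ | u (e n) ≠ v (e n)})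
    omega

variable [TopologicalSpace A] [DiscreteTopology A] [Finite A]

/-- The set of `ε`-proximal shifts is open in the full space of shifts. -/
lemma epsProximal_isOpen_shiftSpace (e : ℕ → G) (he : Function.Surjective e)
    {ε : ℝ} (hε : 0 < ε) :
    @IsOpen _ (shiftSpaceTopology G A e) {S : ShiftSpace G A | EpsProximal e ε S.1} := by
  classical
  letI := shiftSpaceTopology G A e
  rw [isOpen_iff_forall_mem_open]
  intro S hS
  have hex : ∃ n : ℕ, 1 / ((n : ℝ) + 1) < ε := exists_nat_one_div_lt hε
  set K := Nat.find hex with hKdef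
  -- the clopen cover of S × S
  set U : G → Set ((G → A) × (G → A)) :=
    fun g => {p | ∀ k < K, p.1 (g⁻¹ * e k) = p.2 (g⁻¹ * e k)} with hU
  have hUopen : ∀ g : G, IsOpen (U g) := by
    intro g
    have hrw : U g = ⋂ k : Fin K,
        {p : (G → A) × (G → A) | p.1 (g⁻¹ * e k) = p.2 (g⁻¹ * e k)} := by
      ext p
      constructor
      · intro h
        exact Set.mem_iInter.mpr fun k => h k.1 k.2
      · intro h k hk
        exact Set.mem_iInter.mp h ⟨k, hk⟩
    rw [hrw]
    refine isOpen_iInter_of_finite fun k => ?_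
    have hc : Continuous fun p : (G → A) × (G → A) =>
        (p.1 (g⁻¹ * e k), p.2 (g⁻¹ * e k)) :=
      ((continuous_apply _).comp continuous_fst).prodMk
        ((continuous_apply _).comp continuous_snd)
    exact (isOpen_discrete {q : A × A | q.1 = q.2}).preimage hc
  have hcover : S.1 ×ˢ S.1 ⊆ ⋃ g : G, U g := by
    rintro ⟨s, t⟩ ⟨hs, ht⟩
    obtain ⟨g, hg⟩ := hS s hs t ht
    refine Set.mem_iUnion.mpr ⟨g, fun k hk => ?_⟩
    exact agree_of_confDist_lt e (fun m hm => Nat.find_min hex hm) hg k hk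
  have hcomp : IsCompact (S.1 ×ˢ S.1) :=
    (S.2.2.1.isCompact).prod S.2.2.1.isCompact
  obtain ⟨F, hF⟩ := hcomp.elim_finite_subcover U hUopen hcover
  -- choose indices for the finite window
  choose idx hidx using fun (g : G) (k : ℕ) => he (g⁻¹ * e k)
  set N : ℕ := F.sup (fun g => (Finset.range K).sup fun k => idx g k + 1) with hN
  have hidxN : ∀ g ∈ F, ∀ k < K, idx g k < N := by
    intro g hg k hk
    have h1 : idx g k + 1 ≤ (Finset.range K).sup fun k => idx g k + 1 :=
      Finset.le_sup (f := fun k => idx g k + 1) (Finset.mem_range.mpr hk)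
    have h2 : ((Finset.range K).sup fun k => idx g k + 1) ≤ N :=
      Finset.le_sup (f := fun g => (Finset.range K).sup fun k => idx g k + 1) hg
    omega
  refine ⟨{T | shiftSpaceDist e S T < 1 / ((N : ℝ) + 2)}, ?_, ?_, ?_⟩
  · -- ball included in the ε-proximal shifts
    intro T hT
    by_cases hST : S = T
    · exact hST ▸ hS
    · simp only [Set.mem_setOf_eq, shiftSpaceDist, if_neg hST] at hT
      set M := {n : ℕ | AgreeOn {g : G | ∃ k < n, e k = g} S.1 T.1} with hM
      have hM0 : 0 ∈ M := by
        intro p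
        have hES : ∀ x ∈ {g : G | ∃ k < 0, e k = g}, True := fun _ _ => trivial
        constructor
        · rintro ⟨s, hs, -⟩
          obtain ⟨t, ht⟩ := T.2.1
          exact ⟨t, ht, fun x hx => by obtain ⟨k, hk, -⟩ := hx; omega⟩
        · rintro ⟨t, ht, -⟩
          obtain ⟨s, hs⟩ := S.2.1
          exact ⟨s, hs, fun x hx => by obtain ⟨k, hk, -⟩ := hx; omega⟩
      obtain ⟨n, hnM, hNn⟩ : ∃ n ∈ M, N < n := by
        by_cases hbdd : BddAbove M
        · refine ⟨sSup M, Nat.sSup_mem ⟨0, hM0⟩ hbdd, ?_⟩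
          have h2 : (N : ℝ) + 2 < (Nat.cast (sSup M) : ℝ) + 1 :=
            lt_of_one_div_lt_one_div (by positivity) hT
          have h3 : ((N + 1 : ℕ) : ℝ) < (Nat.cast (sSup M) : ℝ) := by push_cast; linarith
          have h4 : N + 1 < sSup M := by exact_mod_cast h3
          omega
        · obtain ⟨n, hn, hn'⟩ := not_bddAbove_iff.mp hbdd N
          exact ⟨n, hn, hn'⟩
      -- now T is ε-proximal
      intro t ht t' ht'
      obtain ⟨s, hsS, hst⟩ := (hnM t).mpr ⟨t, ht, fun x _ => rfl⟩
      obtain ⟨s', hs'S, hs't'⟩ := (hnM t').mpr ⟨t', ht', fun x _ => rfl⟩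
      have hmem : (s, s') ∈ ⋃ g ∈ F, U g := hF ⟨hsS, hs'S⟩
      rw [Set.mem_iUnion₂] at hmem
      obtain ⟨g, hgF, hg⟩ := hmem
      refine ⟨g, confDist_lt_of_agree e he (Nat.find_spec hex) fun k hk => ?_⟩
      show t (g⁻¹ * e k) = t' (g⁻¹ * e k)
      have hw : g⁻¹ * e k ∈ {x : G | ∃ m < n, e m = x} :=
        ⟨idx g k, lt_trans (hidxN g hgF k hk) hNn, hidx g k⟩
      rw [← hst _ hw, ← hs't' _ hw]
      exact hg k hk
  · -- the ball is open
    exact TopologicalSpace.isOpen_generateFrom_of_mem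
      ⟨S, 1 / ((N : ℝ) + 2), by positivity, rfl⟩
  · -- S is in the ball
    simp [shiftSpaceDist]
    positivity

end Aux

/-- For every `ε > 0` the set of `ε`-proximal shifts is open in `𝒮`; consequently the set of
shifts in `𝒮` on which the `G`-action is proximal (i.e. `ε`-proximal for every `ε > 0`) is a
`G_δ` subset of `𝒮`. -/
theorem epsProximal_isOpen_and_proximal_isGδ
    (G : Type) [Group G] [Countable G]
    (A : Type) [Fintype A] [TopologicalSpace A] [DiscreteTopology A]
    (hA : 2 ≤ Fintype.card A)
    (e : ℕ → G) (he : Function.Surjective e) :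
    (∀ ε : ℝ, 0 < ε →
      @IsOpen ↥(scriptS G A e) (scriptSTopology G A e)
        {S : ↥(scriptS G A e) | EpsProximal e ε S.1.1}) ∧
    @IsGδ ↥(scriptS G A e) (scriptSTopology G A e)
      {S : ↥(scriptS G A e) | ∀ ε : ℝ, 0 < ε → EpsProximal e ε S.1.1} := by
    classical
  have hopen : ∀ ε : ℝ, 0 < ε →
      @IsOpen ↥(scriptS G A e) (scriptSTopology G A e)
        {S : ↥(scriptS G A e) | EpsProximal e ε S.1.1} := by
    intro ε hε
    have h1 := epsProximal_isOpen_shiftSpace (A := A) e he hε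
    show @IsOpen _ (TopologicalSpace.induced Subtype.val (shiftSpaceTopology G A e)) _
    exact ⟨_, h1, rfl⟩
  refine ⟨hopen, ?_⟩
  letI := scriptSTopology G A e
  have hset : {S : ↥(scriptS G A e) | ∀ ε : ℝ, 0 < ε → EpsProximal e ε S.1.1}
      = ⋂ n : ℕ, {S : ↥(scriptS G A e) | EpsProximal e (1 / ((n : ℝ) + 1)) S.1.1} := by
    ext S
    simp only [Set.mem_iInter, Set.mem_setOf_eq]
    constructor
    · exact fun h n => h _ (by positivity)
    · intro h ε hε s hs t ht
      obtain ⟨n, hn⟩ := exists_nat_one_div_lt hε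
      obtain ⟨g, hg⟩ := h n s hs t ht
      exact ⟨g, hg.trans hn⟩
  rw [hset]
  exact IsGδ.iInter fun n => (hopen _ (by positivity)).isGδ
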